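/- If gcd(n, 210) = 1, then the (n,3)-queens problem has a solution: the set of n² points whose coordinates, read in ℤ/nℤ, are {(i, j, 3i + 5j mod n) : i, j ∈ ℤ/nℤ} is a non-attacking set of n² queens on the (n,3)-board. -/
import Mathlib


/-- A point `q` lies on the `(n,d)`-board, i.e. all coordinates are in `{1,…,n}`. -/
def onBoard (n d : ℕ) (q : Fin d → ℕ) : Prop :=
  ∀ i, 1 ≤ q i ∧ q i ≤ n

/-- Queen `a` attacks queen `b`: there are an integer `m` and a nonzero vector
`ε ∈ {-1,0,1}^d` with `a i = ε i * m + b i` for all `i`. -/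
def attacks {d : ℕ} (a b : Fin d → ℕ) : Prop :=
  ∃ (m : ℤ) (ε : Fin d → ℤ), (∀ i, ε i = -1 ∨ ε i = 0 ∨ ε i = 1) ∧ ε ≠ 0 ∧
    ∀ i, (a i : ℤ) = ε i * m + (b i : ℤ)

/-- A set of queens is non-attacking if no two distinct members attack each other. -/
def nonAttacking {d : ℕ} (Q : Finset (Fin d → ℕ)) : Prop :=
  ∀ a ∈ Q, ∀ b ∈ Q, a ≠ b → ¬ attacks a b

/-- A partial solution on the `(n,d)`-board: a non-attacking set fitting the board. -/
def isPartial (n d : ℕ) (Q : Finset (Fin d → ℕ)) : Prop :=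
  (∀ q ∈ Q, onBoard n d q) ∧ nonAttacking Q

/-- A solution to the `(n,d)`-queens problem: a non-attacking set of `n^(d-1)` queens. -/
def isSolution (n d : ℕ) (Q : Finset (Fin d → ℕ)) : Prop :=
  isPartial n d Q ∧ Q.card = n ^ (d - 1)

/-- The `(n,d)`-board as a finite set. -/
def boardFinset (n d : ℕ) : Finset (Fin d → ℕ) :=
  Fintype.piFinset fun _ => Finset.Icc 1 n

/-- `Qmax n d` : the maximum cardinality of a non-attacking set on the `(n,d)`-board. -/
noncomputable def Qmax (n d : ℕ) : ℕ :=
  sSup {k | ∃ Q : Finset (Fin d → ℕ), isPartial n d Q ∧ Q.card = k}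

/-- Two numbers in `[1,n]` with equal images in `ZMod n` are equal. -/
lemma aux_eq_of_cast_eq {n a b : ℕ} (ha1 : 1 ≤ a) (han : a ≤ n) (hb1 : 1 ≤ b)
    (hbn : b ≤ n) (hab : (a : ZMod n) = b) : a = b := by
  have h1 := (ZMod.natCast_eq_natCast_iff a b n).mp hab
  have h2 := (Nat.modEq_iff_dvd).mp h1
  have h3 : (b : ℤ) - a = 0 := Int.eq_zero_of_abs_lt_dvd h2 (by rw [abs_sub_lt_iff]; omega)
  omega

/- `n` coprime to `210` is coprime to every `k ∈ [1,9]`. -/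
lemma aux_coprime_small {n : ℕ} (h : Nat.Coprime n 210) :
    ∀ k : ℕ, 1 ≤ k → k ≤ 9 → Nat.Coprime n k := by
  have h2 : Nat.Coprime n 2 := h.coprime_dvd_right (by norm_num)
  have h3 : Nat.Coprime n 3 := h.coprime_dvd_right (by norm_num)
  have h5 : Nat.Coprime n 5 := h.coprime_dvd_right (by norm_num)
  have h7 : Nat.Coprime n 7 := h.coprime_dvd_right (by norm_num)
  intro k hk1 hk9
  interval_cases k
  · exact Nat.coprime_one_right n
  · exact h2
  · exact h3
  · simpa using h2.mul_right h2
  · exact h5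
  · simpa using h2.mul_right h3
  · exact h7
  · simpa using h2.mul_right (h2.mul_right h2)
  · simpa using h3.mul_right h3

/-- Klarner's construction: if `gcd(n,210) = 1`, the set of board points whose
coordinates, read in `ℤ/nℤ`, satisfy `z = 3x + 5y` is a non-attacking set of `n²`
queens on the `(n,3)`-board, i.e. a solution to the `(n,3)`-queens problem. -/
theorem klarner_construction (n : ℕ) (h : Nat.gcd n 210 = 1) :
    isSolution n 3
      ((boardFinset n 3).filter
        (fun q => (q 2 : ZMod n) = 3 * (q 0 : ZMod n) + 5 * (q 1 : ZMod n))) := by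
  have hn : 1 ≤ n := by
    rcases Nat.eq_zero_or_pos n with h0 | h0
    · subst h0; simp at h
    · exact h0
  set S := ((boardFinset n 3).filter
      (fun q => (q 2 : ZMod n) = 3 * (q 0 : ZMod n) + 5 * (q 1 : ZMod n))) with hS
  have hmem : ∀ q, q ∈ S ↔ (onBoard n 3 q ∧
      (q 2 : ZMod n) = 3 * (q 0 : ZMod n) + 5 * (q 1 : ZMod n)) := by
    intro q
    simp [hS, boardFinset, Finset.mem_filter, Fintype.mem_piFinset, Finset.mem_Icc,
      onBoard, and_comm]
  refine ⟨⟨fun q hq => ((hmem q).mp hq).1, ?_⟩, ?_⟩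
  · -- non-attacking
    rintro a ha b hb hab ⟨m, ε, hε, hεne, heq⟩
    obtain ⟨hao, haz⟩ := (hmem a).mp ha
    obtain ⟨hbo, hbz⟩ := (hmem b).mp hb
    -- cast the three coordinate equations into ZMod n
    have hz : ∀ i, (a i : ZMod n) = (ε i : ZMod n) * (m : ZMod n) + (b i : ZMod n) := by
      intro i
      have := congrArg (fun x : ℤ => (x : ZMod n)) (heq i)
      push_cast at this
      exact this
    have key : ((ε 2 - 3 * ε 0 - 5 * ε 1 : ℤ) : ZMod n) * ((m : ℤ) : ZMod n) = 0 := by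
      have h0 := hz 0; have h1 := hz 1; have h2 := hz 2
      push_cast
      linear_combination -h2 + 3 * h0 + 5 * h1 + haz - hbz
    set c : ℤ := ε 2 - 3 * ε 0 - 5 * ε 1 with hc
    have hne : ε 0 ≠ 0 ∨ ε 1 ≠ 0 ∨ ε 2 ≠ 0 := by
      by_contra hcon
      push_neg at hcon
      apply hεne
      funext i
      fin_cases i <;> simp [hcon.1, hcon.2.1, hcon.2.2]
    have hcb : c ≠ 0 ∧ 1 ≤ c.natAbs ∧ c.natAbs ≤ 9 := by
      rcases hε 0 with h0 | h0 | h0 <;> rcases hε 1 with h1 | h1 | h1 <;>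
        rcases hε 2 with h2 | h2 | h2 <;> omega
    have hcop : IsCoprime (n : ℤ) c := by
      rw [Int.isCoprime_iff_gcd_eq_one]
      have := aux_coprime_small h c.natAbs hcb.2.1 hcb.2.2
      simpa [Int.gcd] using this
    have hdvd : (n : ℤ) ∣ c * m := by
      have := (ZMod.intCast_zmod_eq_zero_iff_dvd (c * m) n).mp (by push_cast; exact key)
      exact this
    have hm : (n : ℤ) ∣ m := hcop.dvd_of_dvd_mul_left hdvd
    -- some coordinate has ε i ≠ 0 ; bound |m| < n
    have hm0 : m = 0 := by
      obtain ⟨i, hi⟩ : ∃ i, ε i ≠ 0 := by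
        rcases hne with h' | h' | h'
        exacts [⟨0, h'⟩, ⟨1, h'⟩, ⟨2, h'⟩]
      have hei := hε i
      have heqi := heq i
      have hai := hao i
      have hbi := hbo i
      rcases hei with he | he | he
      · rw [he] at heqi
        have : m = (b i : ℤ) - a i := by linarith
        refine Int.eq_zero_of_abs_lt_dvd hm (by rw [abs_lt]; omega)
      · exact absurd he hi
      · rw [he] at heqi
        refine Int.eq_zero_of_abs_lt_dvd hm (by rw [abs_lt]; omega)
    apply hab
    funext i
    have := heq i
    rw [hm0] at this
    omega
  · -- cardinality
    have hcard2 : ((Finset.Icc 1 n) ×ˢ (Finset.Icc 1 n)).card = n ^ (3 - 1) := by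
      simp [Finset.card_product, Nat.card_Icc, sq]
    rw [show n ^ (3 - 1) = ((Finset.Icc 1 n) ×ˢ (Finset.Icc 1 n)).card from hcard2.symm]
    apply Finset.card_bij' (fun q _ => (q 0, q 1))
      (fun p _ => ![p.1, p.2, (3 * p.1 + 5 * p.2 - 1) % n + 1])
    · -- forward maps into product
      intro q hq
      obtain ⟨hob, _⟩ := (hmem q).mp hq
      simp [Finset.mem_product, Finset.mem_Icc]
      exact ⟨hob 0, hob 1⟩
    · -- backward maps into S
      rintro ⟨x, y⟩ hp
      simp only [Finset.mem_product, Finset.mem_Icc] at hp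
      rw [hmem]
      constructor
      · intro i
        have hlt := Nat.mod_lt (3 * x + 5 * y - 1) hn
        fin_cases i <;> simp <;> omega
      · show (((3 * x + 5 * y - 1) % n + 1 : ℕ) : ZMod n) = 3 * (x : ZMod n) + 5 * (y : ZMod n)
        have hxy : 3 * x + 5 * y - 1 + 1 = 3 * x + 5 * y := by omega
        push_cast [ZMod.natCast_mod]
        have : ((3 * x + 5 * y - 1 : ℕ) : ZMod n) + 1 = ((3 * x + 5 * y - 1 + 1 : ℕ) : ZMod n) := by
          push_cast; ring
        rw [this, hxy]
        push_cast; ring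
    · -- right inverse on S
      intro q hq
      obtain ⟨hob, hzq⟩ := (hmem q).mp hq
      funext i
      fin_cases i
      · simp
      · simp
      · show (3 * q 0 + 5 * q 1 - 1) % n + 1 = q 2
        have hz1 : 1 ≤ (3 * q 0 + 5 * q 1 - 1) % n + 1 := by omega
        have hz2 : (3 * q 0 + 5 * q 1 - 1) % n + 1 ≤ n := by
          have := Nat.mod_lt (3 * q 0 + 5 * q 1 - 1) hn
          omega
        refine aux_eq_of_cast_eq hz1 hz2 (hob 2).1 (hob 2).2 ?_
        have hxy : 3 * q 0 + 5 * q 1 - 1 + 1 = 3 * q 0 + 5 * q 1 := by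
          have := (hob 0).1; have := (hob 1).1; omega
        rw [hzq]
        push_cast [ZMod.natCast_mod]
        have : ((3 * q 0 + 5 * q 1 - 1 : ℕ) : ZMod n) + 1
            = ((3 * q 0 + 5 * q 1 - 1 + 1 : ℕ) : ZMod n) := by push_cast; ring
        rw [this, hxy]
        push_cast; ring
    · -- left inverse on product
      rintro ⟨x, y⟩ _
      simp
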